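/- In the 3SAT-to-model-repair reduction, if V is a satisfying assignment of the 3cnf formula f, then the substructure M' of M_f obtained by keeping all transitions from s0, all self-loops, and the transition s_j → t_j exactly when V(x_j) is true, is total and satisfies M', s0 ⊨ η_f. -/
import Mathlib


/-- States of the reduction structure: s0, s_j, t_j. -/
inductive RSt (m : ℕ) : Type
  | s0 : RSt m
  | s : Fin m → RSt m
  | t : Fin m → RSt m

/-- Transitions of M_f: s0→s_j, s_j→t_j, and self-loops on every state. -/
def baseR {m : ℕ} : RSt m → RSt m → Prop
  | RSt.s0, RSt.s _ => True
  | RSt.s0, RSt.s0 => True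
  | RSt.s j, RSt.t k => j = k
  | RSt.s j, RSt.s k => j = k
  | RSt.t j, RSt.t k => j = k
  | _, _ => False

/-- A literal is a sign together with a variable index. -/
abbrev Lit (m : ℕ) := Bool × Fin m

/-- A 3cnf clause. -/
abbrev Clause (m : ℕ) := Lit m × Lit m × Lit m

def evalLit {m : ℕ} (V : Fin m → Bool) (l : Lit m) : Prop := V l.2 = l.1

/-- Satisfaction of a 3cnf formula (a list of clauses). -/
def cnfSat {m : ℕ} (f : List (Clause m)) (V : Fin m → Bool) : Prop :=
  ∀ c ∈ f, evalLit V c.1 ∨ evalLit V c.2.1 ∨ evalLit V c.2.2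

/-- Truth at s0 of the CTL conjunct associated to a literal, in the substructure
    with transition relation R'.  Since p_j labels only s_j and q_j labels only
    t_j, AG(p_j → EX q_j) says: if s_j is reachable from s0 then (s_j,t_j) ∈ R';
    AG(p_j → AX ¬q_j) says: if s_j is reachable then (s_j,t_j) ∉ R'. -/
def litHolds {m : ℕ} (R' : RSt m → RSt m → Prop) (l : Lit m) : Prop :=
  if l.1 then
    (Relation.ReflTransGen R' RSt.s0 (RSt.s l.2) → R' (RSt.s l.2) (RSt.t l.2))
  else
    (Relation.ReflTransGen R' RSt.s0 (RSt.s l.2) → ¬ R' (RSt.s l.2) (RSt.t l.2))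

/-- M', s0 ⊨ η_f. -/
def etaHolds {m : ℕ} (f : List (Clause m)) (R' : RSt m → RSt m → Prop) : Prop :=
  ∀ c ∈ f, litHolds R' c.1 ∨ litHolds R' c.2.1 ∨ litHolds R' c.2.2

/-- The substructure obtained from a satisfying assignment V: keep all edges
    from s0, all self-loops, and the edge s_j → t_j exactly when V x_j is true. -/
def repairedR {m : ℕ} (V : Fin m → Bool) : RSt m → RSt m → Prop
  | RSt.s0, RSt.s _ => True
  | RSt.s0, RSt.s0 => True
  | RSt.s j, RSt.t k => j = k ∧ V j = true
  | RSt.s j, RSt.s k => j = k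
  | RSt.t j, RSt.t k => j = k
  | _, _ => False

/-- If V satisfies f, then the repaired substructure is a total substructure of
    M_f satisfying η_f. -/
theorem satisfying_assignment_gives_repair {m : ℕ} (f : List (Clause m))
    (V : Fin m → Bool) (hV : cnfSat f V) :
    (∀ u v, repairedR V u v → baseR u v) ∧
    (∀ u, ∃ v, repairedR V u v) ∧
    etaHolds f (repairedR V) := by
  refine ⟨?_, ?_, ?_⟩
  · intro u v h
    cases u <;> cases v <;> simp_all [repairedR, baseR]
  · intro u
    cases u with
    | s0 => exact ⟨RSt.s0, trivial⟩
    | s j => exact ⟨RSt.s j, rfl⟩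
    | t j => exact ⟨RSt.t j, rfl⟩
  · intro c hc
    have key : ∀ l : Lit m, evalLit V l → litHolds (repairedR V) l := by
      intro l hl
      unfold litHolds
      rcases l with ⟨b, j⟩
      cases b with
      | true => simp only [if_true]; intro _; exact ⟨rfl, hl⟩
      | false =>
        simp only [Bool.false_eq_true, if_false]
        intro _ h
        exact absurd (h.2.symm.trans hl) (by simp)
    rcases hV c hc with h | h | h
    · exact Or.inl (key _ h)
    · exact Or.inr (Or.inl (key _ h))
    · exact Or.inr (Or.inr (key _ h))
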